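/- For Turing's combinator in the clocked λ-calculus: Y₁ f = η η f reduces in finitely many clocked steps to τ(τ(f (η η f))); hence for every n ≥ 1, Y₁ f ↠c τ²(f(τ²(f(⋯τ²(f (η η f))⋯)))) with n occurrences of f. -/

import Mathlib

/-- clocked λ-terms: λ-terms with an extra unary constructor τ -/
inductive CLam : Type
  | var : Nat → CLam
  | app : CLam → CLam → CLam
  | lam : CLam → CLam
  | tau : CLam → CLam
deriving DecidableEq

namespace CLam

def lift (d : Nat) : CLam → CLam
  | var n => if n < d then var n else var (n+1)
  | app M N => app (lift d M) (lift d N)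
  | lam M => lam (lift (d+1) M)
  | tau M => tau (lift d M)

def subst (k : Nat) (N : CLam) : CLam → CLam
  | var n => if n = k then N else if k < n then var (n-1) else var n
  | app A B => app (subst k N A) (subst k N B)
  | lam A => lam (subst (k+1) (lift 0 N) A)
  | tau A => tau (subst k N A)

/-- one-step clocked reduction: compatible closure of
    (λ.M)N → τ(M[0:=N]) and (τ M)N → τ(M N) -/
inductive CStep : CLam → CLam → Prop
  | beta (M N : CLam) : CStep (app (lam M) N) (tau (subst 0 N M))
  | tauApp (M N : CLam) : CStep (app (tau M) N) (tau (app M N))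
  | appL {M M'} (N) : CStep M M' → CStep (app M N) (app M' N)
  | appR (M) {N N'} : CStep N N' → CStep (app M N) (app M N')
  | lam {M M'} : CStep M M' → CStep (lam M) (lam M')
  | tau {M M'} : CStep M M' → CStep (tau M) (tau M')

abbrev CStar : CLam → CLam → Prop := Relation.ReflTransGen CStep

/-- n-fold τ -/
def tauN : Nat → CLam → CLam
  | 0, M => M
  | n+1, M => tau (tauN n M)

end CLam

open CLam

def fv : CLam := CLam.var 0
/-- η = λx.λf.f(xxf) -/
def eta : CLam :=
  CLam.lam (CLam.lam (CLam.app (CLam.var 0)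
    (CLam.app (CLam.app (CLam.var 1) (CLam.var 1)) (CLam.var 0))))
def Y1 : CLam := CLam.app eta eta

/-- g n = τ²(f(τ²(f(…τ²(f (ηη f))…)))) with n occurrences of f (g 0 = Y₁ f) -/
def g : Nat → CLam
  | 0 => CLam.app Y1 fv
  | n+1 => CLam.tau (CLam.tau (CLam.app fv (g n)))

lemma key : CStar (CLam.app Y1 fv) (CLam.tau (CLam.tau (CLam.app fv (CLam.app Y1 fv)))) := by
  have s1 : CStep (CLam.app Y1 fv)
      (CLam.app (CLam.tau (CLam.lam (CLam.app (CLam.var 0)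
        (CLam.app (CLam.app eta eta) (CLam.var 0))))) fv) := by
    have h := CStep.appL (M := CLam.app eta eta) fv (CStep.beta
      (CLam.lam (CLam.app (CLam.var 0)
        (CLam.app (CLam.app (CLam.var 1) (CLam.var 1)) (CLam.var 0)))) eta)
    convert h using 2
    all_goals rfl
  have s2 : CStep (CLam.app (CLam.tau (CLam.lam (CLam.app (CLam.var 0)
        (CLam.app (CLam.app eta eta) (CLam.var 0))))) fv)
      (CLam.tau (CLam.app (CLam.lam (CLam.app (CLam.var 0)
        (CLam.app (CLam.app eta eta) (CLam.var 0)))) fv)) := CStep.tauApp _ _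
  have s3 : CStep (CLam.tau (CLam.app (CLam.lam (CLam.app (CLam.var 0)
        (CLam.app (CLam.app eta eta) (CLam.var 0)))) fv))
      (CLam.tau (CLam.tau (CLam.app fv (CLam.app Y1 fv)))) := by
    have h := CStep.tau (CStep.beta (CLam.app (CLam.var 0)
        (CLam.app (CLam.app eta eta) (CLam.var 0))) fv)
    convert h using 3
    all_goals rfl
  exact Relation.ReflTransGen.head s1 (Relation.ReflTransGen.head s2
    (Relation.ReflTransGen.single s3))

lemma ctx {M M' : CLam} (h : CStar M M') :
    CStar (CLam.tau (CLam.tau (CLam.app fv M))) (CLam.tau (CLam.tau (CLam.app fv M'))) := by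
  induction h with
  | refl => exact Relation.ReflTransGen.refl
  | tail _ s ih => exact ih.tail (CStep.tau (CStep.tau (CStep.appR _ s)))

theorem turing_clocked :
    CStar (CLam.app Y1 fv) (CLam.tau (CLam.tau (CLam.app fv (CLam.app Y1 fv)))) ∧
    (∀ n : Nat, 1 ≤ n → CStar (CLam.app Y1 fv) (g n)) := by
  refine ⟨key, ?_⟩
  intro n hn
  induction n with
  | zero => omega
  | succ m ih =>
    rcases Nat.eq_zero_or_pos m with h | h
    · subst h; exact key
    · exact key.trans (ctx (ih h))
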